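/- arXiv:2412.14980 — 2 statements merged into one kernel-verified Lean document; each statement's English description precedes it below -/
import Mathlib

section
/- Let p be a prime with p ≥ 11, and let a, b be integers with p ∤ a, p ∤ b. Then the equation a·x³ + b·y³ = z³ has a solution (x, y, z) ∈ ℤₚ³ with not all coordinates zero. -/
open Finset

section aux

variable {p : ℕ} [Fact p.Prime]

/-- shorthand: `1 + χ u + (χ u)^2`. -/
noncomputable def eaux (χ : MulChar (ZMod p) ℂ) (u : ZMod p) : ℂ :=
  1 + χ u + (χ u) ^ 2

lemma chi_cube {χ : MulChar (ZMod p) ℂ} (hχ : χ ^ 3 = 1) {u : ZMod p} (hu : u ≠ 0) :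
    (χ u) ^ 3 = 1 := by
  rw [← MulChar.pow_apply' χ (by norm_num) u, hχ,
    MulChar.one_apply (isUnit_iff_ne_zero.mpr hu)]

lemma chi_norm {χ : MulChar (ZMod p) ℂ} (hχ : χ ^ 3 = 1) {u : ZMod p} (hu : u ≠ 0) :
    ‖χ u‖ = 1 := by
  have h := chi_cube hχ hu
  have h2 : ‖χ u‖ ^ 3 = 1 := by rw [← norm_pow, h, norm_one]
  nlinarith [norm_nonneg (χ u), sq_nonneg (‖χ u‖ - 1), sq_nonneg (‖χ u‖ + 1)]

lemma count_eq {χ : MulChar (ZMod p) ℂ} (hχord : orderOf χ = 3) (u : ZMod p) :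
    (((univ : Finset (ZMod p)).filter (fun x : ZMod p => x ^ 3 = u)).card : ℂ)
      = eaux χ u := by
  classical
  have hχ3 : χ ^ 3 = 1 := hχord ▸ pow_orderOf_eq_one χ
  have hχ1 : χ ≠ 1 := by
    intro h; rw [h, orderOf_one] at hχord; norm_num at hχord
  have hχ2 : χ ^ 2 ≠ 1 := by
    intro h
    have := orderOf_dvd_of_pow_eq_one h
    rw [hχord] at this; norm_num at this
  set E : ZMod p → ℝ := fun u => if u = 0 then 1 else if χ u = 1 then 3 else 0 with hE
  have hEe : ∀ u : ZMod p, (E u : ℂ) = eaux χ u := by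
    intro u
    by_cases h0 : u = 0
    · simp [hE, h0, eaux, MulChar.map_zero]
    · by_cases h1 : χ u = 1
      · simp [hE, h0, h1, eaux]; norm_num
      · have hcube := chi_cube hχ3 h0
        have hfac : (χ u - 1) * (eaux χ u) = 0 := by
          have : (χ u - 1) * (eaux χ u) = (χ u) ^ 3 - 1 := by rw [eaux]; ring
          rw [this, hcube, sub_self]
        rcases mul_eq_zero.mp hfac with h | h
        · exact absurd (sub_eq_zero.mp h) h1
        · simp [hE, h0, h1, h]
  have hle : ∀ u : ZMod p,
      (((univ : Finset (ZMod p)).filter (fun x : ZMod p => x ^ 3 = u)).card : ℝ) ≤ E u := by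
    intro u
    by_cases h0 : u = 0
    · subst h0
      have hsub : (univ : Finset (ZMod p)).filter (fun x : ZMod p => x ^ 3 = 0) ⊆ {0} := by
        intro x hx
        rw [mem_filter] at hx
        rw [mem_singleton]
        exact pow_eq_zero_iff (by norm_num) |>.mp hx.2
      have hc := Finset.card_le_card hsub
      simp only [Finset.card_singleton] at hc
      have hE0 : E 0 = 1 := by simp [hE]
      rw [hE0]
      exact_mod_cast hc
    · by_cases h1 : χ u = 1
      · have hP : (Polynomial.X ^ 3 - Polynomial.C u : Polynomial (ZMod p)) ≠ 0 :=
          Polynomial.X_pow_sub_C_ne_zero (by norm_num) u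
        have hsub : (univ : Finset (ZMod p)).filter (fun x : ZMod p => x ^ 3 = u)
            ⊆ (Polynomial.X ^ 3 - Polynomial.C u : Polynomial (ZMod p)).roots.toFinset := by
          intro x hx
          rw [mem_filter] at hx
          rw [Multiset.mem_toFinset, Polynomial.mem_roots hP]
          simp [hx.2]
        have h2 := Finset.card_le_card hsub
        have h3 := Multiset.toFinset_card_le
          (Polynomial.X ^ 3 - Polynomial.C u : Polynomial (ZMod p)).roots
        have h4 := Polynomial.card_roots'
          (Polynomial.X ^ 3 - Polynomial.C u : Polynomial (ZMod p))
        rw [Polynomial.natDegree_X_pow_sub_C] at h4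
        have : ((univ : Finset (ZMod p)).filter (fun x : ZMod p => x ^ 3 = u)).card ≤ 3 :=
          le_trans h2 (le_trans h3 h4)
        simp [hE, h0, h1]
        exact_mod_cast this
      · have hempty : (univ : Finset (ZMod p)).filter (fun x : ZMod p => x ^ 3 = u) = ∅ := by
          rw [Finset.filter_eq_empty_iff]
          intro x _
          intro hx3
          apply h1
          have hxne : x ≠ 0 := by
            intro h; rw [h] at hx3; simp at hx3; exact h0 hx3.symm
          rw [← hx3, map_pow]
          exact chi_cube hχ3 hxne
        simp [hE, h0, h1, hempty]
  have hsum1 : ∑ u : ZMod p,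
      (((univ : Finset (ZMod p)).filter (fun x : ZMod p => x ^ 3 = u)).card : ℝ) = p := by
    have hn : ∑ u : ZMod p,
        ((univ : Finset (ZMod p)).filter (fun x : ZMod p => x ^ 3 = u)).card = p := by
      calc ∑ u : ZMod p, ((univ : Finset (ZMod p)).filter (fun x : ZMod p => x ^ 3 = u)).card
          = ∑ u : ZMod p, ∑ _x ∈ (univ : Finset (ZMod p)).filter
              (fun x : ZMod p => x ^ 3 = u), 1 :=
            Finset.sum_congr rfl fun u _ => Finset.card_eq_sum_ones _
        _ = ∑ _x : ZMod p, 1 :=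
            Finset.sum_fiberwise_of_maps_to (fun x _ => mem_univ (x ^ 3)) _
        _ = p := by
            rw [Finset.sum_const, smul_eq_mul, mul_one, Finset.card_univ, ZMod.card]
    exact_mod_cast hn
  have hsum2 : ∑ u : ZMod p, E u = p := by
    have hC : ((∑ u : ZMod p, E u : ℝ) : ℂ) = p := by
      push_cast
      calc ∑ u : ZMod p, ((E u : ℝ) : ℂ) = ∑ u : ZMod p, eaux χ u := by
            exact Finset.sum_congr rfl fun u _ => hEe u
        _ = (∑ _u : ZMod p, (1 : ℂ)) + (∑ u : ZMod p, χ u)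
            + ∑ u : ZMod p, (χ u) ^ 2 := by
            simp only [eaux, Finset.sum_add_distrib]
        _ = p := by
            have e1 : ∑ u : ZMod p, χ u = 0 := MulChar.sum_eq_zero_of_ne_one hχ1
            have e2 : ∑ u : ZMod p, (χ u) ^ 2 = 0 := by
              have : ∀ u : ZMod p, (χ u) ^ 2 = (χ ^ 2) u := fun u =>
                (MulChar.pow_apply' χ two_ne_zero u).symm
              rw [Finset.sum_congr rfl fun u _ => this u]
              exact MulChar.sum_eq_zero_of_ne_one hχ2
            rw [e1, e2, add_zero, add_zero, Finset.sum_const, nsmul_eq_mul, mul_one,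
              Finset.card_univ, ZMod.card]
    exact_mod_cast hC
  have key := (Finset.sum_eq_sum_iff_of_le (fun i _ => hle i)).mp
    (hsum1.trans hsum2.symm) u (mem_univ u)
  rw [← hEe u, ← key]
  norm_num

end aux

section aux2

variable {p : ℕ} [Fact p.Prime]

lemma factA {χ : MulChar (ZMod p) ℂ} (hχord : orderOf χ = 3) (g : ZMod p → ℂ) :
    ∑ x : ZMod p, g (x ^ 3) = ∑ u : ZMod p, eaux χ u * g u := by
  classical
  rw [← Finset.sum_fiberwise_of_maps_to' (g := fun x : ZMod p => x ^ 3)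
    (fun x _ => mem_univ (x ^ 3)) g]
  refine Finset.sum_congr rfl fun u _ => ?_
  rw [Finset.sum_const, nsmul_eq_mul, count_eq hχord u]

lemma jacobi_conj (ψ : MulChar (ZMod p) ℂ) :
    jacobiSum ψ⁻¹ ψ⁻¹ = (starRingEnd ℂ) (jacobiSum ψ ψ) := by
  rw [jacobiSum, jacobiSum, map_sum]
  refine Finset.sum_congr rfl fun x _ => ?_
  rw [map_mul, starRingEnd_apply, starRingEnd_apply,
    ← MulChar.star_apply' ψ x, ← MulChar.star_apply' ψ (1 - x)]

lemma jacobi_norm (ψ : MulChar (ZMod p) ℂ) (hψ : ψ ≠ 1) (hψψ : ψ * ψ ≠ 1) :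
    ‖jacobiSum ψ ψ‖ = Real.sqrt p := by
  have hchar : ringChar ℂ ≠ ringChar (ZMod p) := by
    rw [ringChar.eq_zero, ZMod.ringChar_zmod_n]
    exact (Nat.Prime.ne_zero Fact.out).symm
  have h1 := jacobiSum_mul_jacobiSum_inv hchar hψ hψ hψψ
  rw [jacobi_conj, Complex.mul_conj] at h1
  have h2 : Complex.normSq (jacobiSum ψ ψ) = p := by
    rw [ZMod.card] at h1
    exact_mod_cast h1
  rw [Complex.norm_def, h2]

lemma hard_case (p : ℕ) [Fact p.Prime] (hp : 11 ≤ p) (hdvd : 3 ∣ p - 1)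
    (A B : ZMod p) (hA : A ≠ 0) (hB : B ≠ 0) :
    ∃ x y : ZMod p, A * x ^ 3 + B * y ^ 3 = 1 := by
  classical
  obtain ⟨χ, hχord⟩ := MulChar.exists_mulChar_orderOf (ZMod p)
    (by rw [ZMod.card]; exact hdvd) (Complex.isPrimitiveRoot_exp 3 (by norm_num))
  have hχ3 : χ ^ 3 = 1 := hχord ▸ pow_orderOf_eq_one χ
  have hχ1 : χ ≠ 1 := by intro h; rw [h, orderOf_one] at hχord; norm_num at hχord
  have hχ2 : χ ^ 2 ≠ 1 := by
    intro h
    have h' := orderOf_dvd_of_pow_eq_one h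
    rw [hχord] at h'; norm_num at h'
  by_contra hno
  push_neg at hno
  set D : ZMod p → ℂ := fun t => if t = 1 then 1 else 0 with hD
  set T : ℂ := ∑ x : ZMod p, ∑ y : ZMod p, D (A * x ^ 3 + B * y ^ 3) with hT
  have hT0 : T = 0 := by
    rw [hT]
    refine Finset.sum_eq_zero fun x _ => Finset.sum_eq_zero fun y _ => ?_
    simp [hD, hno x y]
  have step1 : T = ∑ v : ZMod p, eaux χ v * ∑ x : ZMod p, D (A * x ^ 3 + B * v) := by
    rw [hT]
    have h1 : ∀ x : ZMod p, ∑ y : ZMod p, D (A * x ^ 3 + B * y ^ 3)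
        = ∑ v : ZMod p, eaux χ v * D (A * x ^ 3 + B * v) :=
      fun x => factA hχord (fun v => D (A * x ^ 3 + B * v))
    rw [Finset.sum_congr rfl fun x _ => h1 x, Finset.sum_comm]
    exact Finset.sum_congr rfl fun v _ => (Finset.mul_sum _ _ _).symm
  have step2 : ∀ v : ZMod p, ∑ x : ZMod p, D (A * x ^ 3 + B * v)
      = ∑ u : ZMod p, eaux χ u * D (A * u + B * v) :=
    fun v => factA hχord (fun u => D (A * u + B * v))
  have step3 : ∀ v : ZMod p, ∑ u : ZMod p, eaux χ u * D (A * u + B * v)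
      = eaux χ (A⁻¹ * (1 - B * v)) := by
    intro v
    have hpt : ∀ u : ZMod p, eaux χ u * D (A * u + B * v)
        = if u = A⁻¹ * (1 - B * v) then eaux χ u else 0 := by
      intro u
      by_cases h : u = A⁻¹ * (1 - B * v)
      · subst h
        have harg : A * (A⁻¹ * (1 - B * v)) + B * v = 1 := by
          rw [← mul_assoc, mul_inv_cancel₀ hA, one_mul]
          ring
        simp [hD, harg]
      · have harg : A * u + B * v ≠ 1 := by
          intro hcon
          apply h
          have hAu : A * u = 1 - B * v := by linear_combination hcon
          rw [← hAu, ← mul_assoc, inv_mul_cancel₀ hA, one_mul]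
        simp [hD, h, harg]
    rw [Finset.sum_congr rfl fun u _ => hpt u, Finset.sum_ite_eq' univ _ (eaux χ)]
    simp
  have step4 : T = ∑ w : ZMod p, eaux χ (B⁻¹ * w) * eaux χ (A⁻¹ * (1 - w)) := by
    rw [step1, Finset.sum_congr rfl fun v _ => by rw [step2 v, step3 v]]
    rw [← Equiv.sum_comp (Equiv.mulLeft₀ B⁻¹ (inv_ne_zero hB))
      (fun v => eaux χ v * eaux χ (A⁻¹ * (1 - B * v)))]
    refine Finset.sum_congr rfl fun w _ => ?_
    have : B * (B⁻¹ * w) = w := by rw [← mul_assoc, mul_inv_cancel₀ hB, one_mul]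
    simp only [Equiv.mulLeft₀_apply]
    rw [this]
  set a0 : ℂ := χ A⁻¹ with ha0
  set b0 : ℂ := χ B⁻¹ with hb0
  have hexp : ∀ w : ZMod p,
      eaux χ (B⁻¹ * w) * eaux χ (A⁻¹ * (1 - w)) =
        1 + a0 * χ (1 - w) + a0 ^ 2 * (χ (1 - w)) ^ 2
          + b0 * χ w + b0 ^ 2 * (χ w) ^ 2
          + a0 * b0 * (χ w * χ (1 - w))
          + a0 ^ 2 * b0 * (χ w * (χ (1 - w)) ^ 2)
          + a0 * b0 ^ 2 * ((χ w) ^ 2 * χ (1 - w))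
          + a0 ^ 2 * b0 ^ 2 * ((χ w) ^ 2 * (χ (1 - w)) ^ 2) := by
    intro w
    rw [eaux, eaux, map_mul, map_mul]
    ring
  have hS1 : ∑ w : ZMod p, χ w = 0 := MulChar.sum_eq_zero_of_ne_one hχ1
  have hS2 : ∑ w : ZMod p, (χ w) ^ 2 = 0 := by
    rw [Finset.sum_congr rfl fun w _ => (MulChar.pow_apply' χ two_ne_zero w).symm]
    exact MulChar.sum_eq_zero_of_ne_one hχ2
  have hS1' : ∑ w : ZMod p, χ (1 - w) = 0 :=
    (Equiv.sum_comp (Equiv.subLeft (1 : ZMod p)) (fun w => χ w)).trans hS1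
  have hS2' : ∑ w : ZMod p, (χ (1 - w)) ^ 2 = 0 :=
    (Equiv.sum_comp (Equiv.subLeft (1 : ZMod p)) (fun w => (χ w) ^ 2)).trans hS2
  have hJ11 : ∑ w : ZMod p, χ w * χ (1 - w) = jacobiSum χ χ := rfl
  have hJ12 : ∑ w : ZMod p, χ w * (χ (1 - w)) ^ 2 = jacobiSum χ (χ ^ 2) := by
    rw [jacobiSum]
    exact Finset.sum_congr rfl fun w _ => by rw [MulChar.pow_apply' χ two_ne_zero]
  have hJ21 : ∑ w : ZMod p, (χ w) ^ 2 * χ (1 - w) = jacobiSum (χ ^ 2) χ := by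
    rw [jacobiSum]
    exact Finset.sum_congr rfl fun w _ => by rw [MulChar.pow_apply' χ two_ne_zero]
  have hJ22 : ∑ w : ZMod p, (χ w) ^ 2 * (χ (1 - w)) ^ 2 = jacobiSum (χ ^ 2) (χ ^ 2) := by
    rw [jacobiSum]
    exact Finset.sum_congr rfl fun w _ => by
      rw [MulChar.pow_apply' χ two_ne_zero, MulChar.pow_apply' χ two_ne_zero]
  have hTval : T = (p : ℂ) + (a0 * b0 * jacobiSum χ χ
      + a0 ^ 2 * b0 * jacobiSum χ (χ ^ 2)
      + a0 * b0 ^ 2 * jacobiSum (χ ^ 2) χ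
      + a0 ^ 2 * b0 ^ 2 * jacobiSum (χ ^ 2) (χ ^ 2)) := by
    rw [step4, Finset.sum_congr rfl fun w _ => hexp w]
    simp only [Finset.sum_add_distrib, ← Finset.mul_sum]
    rw [hS1, hS2, hS1', hS2', hJ11, hJ12, hJ21, hJ22]
    rw [Finset.sum_const, nsmul_eq_mul, mul_one, Finset.card_univ, ZMod.card]
    ring
  -- now T = 0 gives the contradiction
  have hR : ‖a0 * b0 * jacobiSum χ χ
      + a0 ^ 2 * b0 * jacobiSum χ (χ ^ 2)
      + a0 * b0 ^ 2 * jacobiSum (χ ^ 2) χ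
      + a0 ^ 2 * b0 ^ 2 * jacobiSum (χ ^ 2) (χ ^ 2)‖ = (p : ℝ) := by
    have h : a0 * b0 * jacobiSum χ χ
      + a0 ^ 2 * b0 * jacobiSum χ (χ ^ 2)
      + a0 * b0 ^ 2 * jacobiSum (χ ^ 2) χ
      + a0 ^ 2 * b0 ^ 2 * jacobiSum (χ ^ 2) (χ ^ 2) = -(p : ℂ) := by
      rw [hT0] at hTval
      linear_combination -hTval
    rw [h, norm_neg]
    simp
  -- norms of the individual pieces
  have ha0n : ‖a0‖ = 1 := chi_norm hχ3 (inv_ne_zero hA)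
  have hb0n : ‖b0‖ = 1 := chi_norm hχ3 (inv_ne_zero hB)
  have hinv1 : χ⁻¹ = χ ^ 2 := inv_eq_of_mul_eq_one_right (by rw [← pow_succ']; exact hχ3)
  have hinv2 : (χ ^ 2)⁻¹ = χ := inv_eq_of_mul_eq_one_right (by rw [← pow_succ]; exact hχ3)
  have hm1 : (-1 : ZMod p) ≠ 0 := by
    intro h
    have := neg_eq_zero.mp h
    exact one_ne_zero this
  have hn12 : ‖jacobiSum χ (χ ^ 2)‖ = 1 := by
    rw [← hinv1, jacobiSum_nontrivial_inv hχ1, norm_neg]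
    exact chi_norm hχ3 hm1
  have hn21 : ‖jacobiSum (χ ^ 2) χ‖ = 1 := by
    have h := jacobiSum_nontrivial_inv hχ2
    rw [hinv2] at h
    rw [h, norm_neg, MulChar.pow_apply' χ two_ne_zero, norm_pow, chi_norm hχ3 hm1, one_pow]
  have hn11 : ‖jacobiSum χ χ‖ = Real.sqrt p :=
    jacobi_norm χ hχ1 (by rw [← pow_two]; exact hχ2)
  have hn22 : ‖jacobiSum (χ ^ 2) (χ ^ 2)‖ = Real.sqrt p := by
    refine jacobi_norm (χ ^ 2) hχ2 ?_
    have h4 : χ ^ 2 * χ ^ 2 = χ := by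
      have h5 : χ ^ 2 * χ ^ 2 = χ ^ 3 * χ := by
        rw [← pow_add, ← pow_succ]
      rw [h5, hχ3, one_mul]
    rw [h4]
    exact hχ1
  -- triangle inequality
  have htri : (p : ℝ) ≤ 1 + 1 + Real.sqrt p + Real.sqrt p := by
    calc (p : ℝ) = ‖a0 * b0 * jacobiSum χ χ
        + a0 ^ 2 * b0 * jacobiSum χ (χ ^ 2)
        + a0 * b0 ^ 2 * jacobiSum (χ ^ 2) χ
        + a0 ^ 2 * b0 ^ 2 * jacobiSum (χ ^ 2) (χ ^ 2)‖ := hR.symm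
      _ ≤ ‖a0 * b0 * jacobiSum χ χ‖ + ‖a0 ^ 2 * b0 * jacobiSum χ (χ ^ 2)‖
        + ‖a0 * b0 ^ 2 * jacobiSum (χ ^ 2) χ‖
        + ‖a0 ^ 2 * b0 ^ 2 * jacobiSum (χ ^ 2) (χ ^ 2)‖ := by
          exact le_trans (norm_add_le _ _) (by
            gcongr
            exact le_trans (norm_add_le _ _) (by
              gcongr
              exact norm_add_le _ _))
      _ = Real.sqrt p + 1 + 1 + Real.sqrt p := by
          simp only [norm_mul, norm_pow]
          rw [ha0n, hb0n, hn11, hn12, hn21, hn22]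
          ring
      _ = 1 + 1 + Real.sqrt p + Real.sqrt p := by ring
  have hs2 : Real.sqrt p ^ 2 = (p : ℝ) := Real.sq_sqrt (by positivity)
  have hsn : 0 ≤ Real.sqrt p := Real.sqrt_nonneg p
  have hp' : (11 : ℝ) ≤ (p : ℝ) := by exact_mod_cast hp
  nlinarith [hs2, hsn, hp', htri]

end aux2

/-- Key mod-p solvability lemma. -/
lemma key_modp (p : ℕ) [Fact p.Prime] (hp : 11 ≤ p) (A B : ZMod p)
    (hA : A ≠ 0) (hB : B ≠ 0) : ∃ x y : ZMod p, A * x ^ 3 + B * y ^ 3 = 1 := by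
  by_cases hdvd : 3 ∣ p - 1
  · exact hard_case p hp hdvd A B hA hB
  · have hcard : Nat.card (ZMod p)ˣ = p - 1 := by
      rw [Nat.card_eq_fintype_card, ZMod.card_units]
    have hcop : (Nat.card (ZMod p)ˣ).Coprime 3 := by
      rw [hcard]
      exact ((Nat.prime_three.coprime_iff_not_dvd).mpr hdvd).symm
    obtain ⟨u, hu⟩ := (powCoprime hcop).surjective (Units.mk0 A hA)⁻¹
    have hu3 : u ^ 3 = (Units.mk0 A hA)⁻¹ := by rw [← powCoprime_apply hcop]; exact hu
    refine ⟨(u : ZMod p), 0, ?_⟩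
    have hval : ((u : ZMod p)) ^ 3 = A⁻¹ := by
      rw [← Units.val_pow_eq_pow_val, hu3, Units.val_inv_eq_inv_val, Units.val_mk0]
    rw [hval]
    simp [mul_inv_cancel₀ hA]

/-- Let `p` be a prime with `p ≥ 11`, and let `a, b` be integers with
`p ∤ a`, `p ∤ b`. Then `a·x³ + b·y³ = z³` has a solution in `ℤₚ³` with not all
coordinates zero. -/
theorem stmt_0 (p : ℕ) [Fact p.Prime] (hp : 11 ≤ p) (a b : ℤ)
    (ha : ¬ (p : ℤ) ∣ a) (hb : ¬ (p : ℤ) ∣ b) :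
    ∃ x y z : ℤ_[p], (x ≠ 0 ∨ y ≠ 0 ∨ z ≠ 0) ∧
      (a : ℤ_[p]) * x ^ 3 + (b : ℤ_[p]) * y ^ 3 = z ^ 3 := by
  have hA : ((a : ZMod p)) ≠ 0 := fun h => ha ((ZMod.intCast_zmod_eq_zero_iff_dvd a p).mp h)
  have hB : ((b : ZMod p)) ≠ 0 := fun h => hb ((ZMod.intCast_zmod_eq_zero_iff_dvd b p).mp h)
  obtain ⟨x₀, y₀, hxy⟩ := key_modp p hp (a : ZMod p) (b : ZMod p) hA hB
  set x : ℤ_[p] := (x₀.val : ℤ_[p]) with hx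
  set y : ℤ_[p] := (y₀.val : ℤ_[p]) with hy
  set c : ℤ_[p] := (a : ℤ_[p]) * x ^ 3 + (b : ℤ_[p]) * y ^ 3 with hc
  have htox : PadicInt.toZMod x = x₀ := by
    rw [hx, map_natCast, ZMod.natCast_val, ZMod.cast_id]
  have htoy : PadicInt.toZMod y = y₀ := by
    rw [hy, map_natCast, ZMod.natCast_val, ZMod.cast_id]
  have htoc : PadicInt.toZMod c = 1 := by
    rw [hc]
    push_cast [map_add, map_mul, map_pow, map_intCast, htox, htoy]
    simpa using hxy
  -- Hensel's lemma for F = X^3 - C c at a = 1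
  have hnorm1 : ‖c - 1‖ < 1 := by
    rw [PadicInt.norm_lt_one_iff_dvd, ← Ideal.mem_span_singleton,
      ← PadicInt.maximalIdeal_eq_span_p, ← PadicInt.ker_toZMod, RingHom.mem_ker, map_sub,
      htoc, map_one, sub_self]
  have hp3 : ¬ (p : ℤ) ∣ 3 := by
    intro h
    have := Int.le_of_dvd (by norm_num) h
    omega
  have hnorm3 : ‖(3 : ℤ_[p])‖ = 1 := by
    have h1 : ¬ ‖((3 : ℤ) : ℤ_[p])‖ < 1 := by
      rw [PadicInt.norm_int_lt_one_iff_dvd]; exact_mod_cast hp3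
    have h2 := PadicInt.norm_le_one ((3 : ℤ) : ℤ_[p])
    push_cast at h1 h2 ⊢
    exact le_antisymm h2 (not_lt.mp h1)
  set F : Polynomial ℤ_[p] := Polynomial.X ^ 3 - Polynomial.C c with hF
  have hFeval : F.eval 1 = 1 - c := by simp [hF]
  have hFderiv : F.derivative = Polynomial.C 3 * Polynomial.X ^ 2 := by
    simp [hF, Polynomial.derivative_X_pow]
    rw [← map_one Polynomial.C, ← map_add]; norm_num
  have hFdeval : F.derivative.eval 1 = 3 := by simp [hFderiv]
  have hhyp : ‖F.eval 1‖ < ‖F.derivative.eval 1‖ ^ 2 := by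
    rw [hFeval, hFdeval, hnorm3, one_pow]
    rw [show (1 : ℤ_[p]) - c = -(c - 1) by ring, norm_neg]
    exact hnorm1
  obtain ⟨z, hz, -⟩ := hensels_lemma hhyp
  have hz3 : z ^ 3 = c := by
    have h : z ^ 3 - c = 0 := by simpa [hF] using hz
    exact sub_eq_zero.mp h
  refine ⟨x, y, z, Or.inr (Or.inr ?_), by rw [← hc, ← hz3]⟩
  · intro h
    rw [h] at hz3
    have : PadicInt.toZMod c = 0 := by rw [← hz3]; simp
    rw [htoc] at this
    exact one_ne_zero this
end

section
/- Let a, b be coprime squarefree integers with 3 ∤ ab, and let p be a prime with p ≡ 1 (mod 3) and p ∣ a. Then a·x³ + b·y³ = z³ has a nonzero solution in ℚₚ if and only if b is a cube modulo p. -/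
section Aux

variable {p : ℕ} [Fact p.Prime]

private lemma aux_val_add_eq_min {x y : ℚ_[p]} (hx : x ≠ 0) (hy : y ≠ 0)
    (hxy : x + y ≠ 0) (hne : x.valuation ≠ y.valuation) :
    (x + y).valuation = min x.valuation y.valuation := by
  have hp1 : (1:ℝ) < p := by exact_mod_cast (Fact.out : p.Prime).one_lt
  have hp0 : (0:ℝ) < p := by linarith
  have hinj := zpow_right_injective₀ hp0 (ne_of_gt hp1)
  have hnorm : ‖x‖ ≠ ‖y‖ := by
    rw [Padic.norm_eq_zpow_neg_valuation hx, Padic.norm_eq_zpow_neg_valuation hy]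
    intro h
    exact hne (by simpa using hinj h)
  have h1 := Padic.add_eq_max_of_ne hnorm
  rw [Padic.norm_eq_zpow_neg_valuation hx, Padic.norm_eq_zpow_neg_valuation hy, Padic.norm_eq_zpow_neg_valuation hxy] at h1
  have h2 : (p:ℝ) ^ (-(x+y).valuation) = (p:ℝ) ^ (-(min x.valuation y.valuation)) := by
    rw [h1]
    rcases le_total x.valuation y.valuation with h | h
    · rw [min_eq_left h, max_eq_left (by
        apply zpow_le_zpow_right₀ (le_of_lt hp1); omega)]
    · rw [min_eq_right h, max_eq_right (by
        apply zpow_le_zpow_right₀ (le_of_lt hp1); omega)]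
  simpa using hinj h2

private lemma aux_val_cube {x : ℚ_[p]} (hx : x ≠ 0) :
    (x^3).valuation = 3 * x.valuation := by
  have h3 : x^3 = x * (x * x) := by ring
  rw [h3, Padic.valuation_mul hx (mul_ne_zero hx hx), Padic.valuation_mul hx hx]; ring

private lemma aux_val_neg (x : ℚ_[p]) : (-x).valuation = x.valuation := by
  by_cases hx : x = 0
  · simp [hx]
  · have h : -x = (-1 : ℤ) * x := by push_cast; ring
    rw [h, Padic.valuation_mul (by norm_num) hx, Padic.valuation_intCast]
    simp [padicValInt]

private lemma aux_val_int_one {a : ℤ} (hpa : (p:ℤ) ∣ a) (hsa : Squarefree a) :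
    ((a : ℚ_[p])).valuation = 1 := by
  have hp := (Fact.out : p.Prime)
  have ha0 : a ≠ 0 := hsa.ne_zero
  have hn0 : a.natAbs ≠ 0 := by simpa using ha0
  have h1 : p ∣ a.natAbs := Int.natAbs_dvd_natAbs.mpr (by exact_mod_cast hpa)
  have h2 : ¬ (p^2 ∣ a.natAbs) := by
    intro h
    have hd : ((p:ℤ))*(p:ℤ) ∣ a := by
      have h' := Int.dvd_natAbs.mp (Int.natCast_dvd_natCast.mpr h)
      rw [← pow_two]; exact_mod_cast h'
    exact (Int.prime_iff_natAbs_prime.mpr (by simpa using hp)).not_unit (hsa _ hd)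
  have hle : 1 ≤ padicValNat p a.natAbs := one_le_padicValNat_of_dvd hn0 h1
  have hlt : padicValNat p a.natAbs < 2 := by
    by_contra h
    exact h2 (dvd_trans (pow_dvd_pow p (by omega)) (pow_padicValNat_dvd))
  rw [Padic.valuation_intCast]
  unfold padicValInt
  omega

private lemma aux_val_int_zero {b : ℤ} (hpb : ¬ (p:ℤ) ∣ b) :
    ((b : ℚ_[p])).valuation = 0 := by
  simp [Padic.valuation_intCast, padicValInt.eq_zero_of_not_dvd hpb]

private lemma aux_toZMod_ne_zero {w : ℤ_[p]} (hw : ‖w‖ = 1) :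
    PadicInt.toZMod w ≠ 0 := by
  intro h0
  have hmem : w ∈ IsLocalRing.maximalIdeal ℤ_[p] := by
    rw [← PadicInt.ker_toZMod]; exact h0
  rw [PadicInt.maximalIdeal_eq_span_p, Ideal.mem_span_singleton,
    ← PadicInt.norm_lt_one_iff_dvd] at hmem
  rw [hw] at hmem
  exact lt_irrefl 1 hmem

private lemma aux_toZMod_eq_zero {w : ℤ_[p]} (hw : ‖w‖ < 1) :
    PadicInt.toZMod w = 0 := by
  have hmem : w ∈ IsLocalRing.maximalIdeal ℤ_[p] := by
    rw [PadicInt.maximalIdeal_eq_span_p, Ideal.mem_span_singleton,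
      ← PadicInt.norm_lt_one_iff_dvd]
    exact hw
  rw [← PadicInt.ker_toZMod] at hmem
  exact hmem

open Polynomial in
private lemma aux_hensel {b : ℤ} (hpb : ¬ (p:ℤ) ∣ b) (hp3 : p ≠ 3)
    (c : ZMod p) (hc : c ^ 3 = (b : ZMod p)) : ∃ z : ℤ_[p], z ^ 3 = (b : ℤ_[p]) := by
  have hp := (Fact.out : p.Prime)
  have hb0 : (b : ZMod p) ≠ 0 := by
    rw [Ne, ZMod.intCast_zmod_eq_zero_iff_dvd]; exact hpb
  have hc0 : c ≠ 0 := by rintro rfl; simp at hc; exact hb0 hc.symm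
  set n : ℤ_[p] := (c.val : ℤ_[p]) with hn
  have htn : PadicInt.toZMod n = c := by
    rw [hn, map_natCast]
    exact ZMod.natCast_rightInverse c
  set F : Polynomial ℤ_[p] := X ^ 3 - C ((b : ℤ_[p])) with hF
  have hev : F.eval n = n ^ 3 - (b : ℤ_[p]) := by simp [hF]
  have hdev : F.derivative.eval n = 3 * n ^ 2 := by
    simp [hF]
    norm_num
  have h1 : ‖F.eval n‖ < 1 := by
    apply lt_of_le_of_ne (PadicInt.norm_le_one _)
    intro h
    exact aux_toZMod_ne_zero h
      (by rw [hev, map_sub, map_pow, htn, map_intCast, hc, sub_self])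
  have h2 : ‖F.derivative.eval n‖ = 1 := by
    by_contra h
    have hlt : ‖F.derivative.eval n‖ < 1 :=
      lt_of_le_of_ne (PadicInt.norm_le_one _) h
    have := aux_toZMod_eq_zero hlt
    rw [hdev, map_mul, map_pow, htn,
      show ((3:ℤ_[p])) = ((3:ℕ):ℤ_[p]) by norm_num, map_natCast] at this
    have h3 : (3 : ZMod p) ≠ 0 := by
      have hnd : ¬ (p ∣ 3) := by
        intro hd; exact hp3 ((Nat.prime_dvd_prime_iff_eq hp (by norm_num)).mp hd)
      intro h0
      exact hnd ((ZMod.natCast_eq_zero_iff 3 p).mp (by exact_mod_cast h0))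
    exact (mul_ne_zero (by exact_mod_cast h3) (pow_ne_zero _ hc0)) this
  obtain ⟨z, hz, -⟩ := hensels_lemma (F := F) (a := n) (by simp only [coe_aeval_eq_eval]; rw [h2]; simpa using h1)
  exact ⟨z, by rw [hF] at hz; simpa [sub_eq_zero] using hz⟩

end Aux

/-- Let `a, b` be coprime squarefree integers with `3 ∤ ab`, and let `p`
be a prime with `p ≡ 1 (mod 3)` and `p ∣ a`. Then `a·x³ + b·y³ = z³` has a nonzero
solution in `ℚₚ` if and only if `b` is a cube modulo `p`. -/
theorem stmt_7 (a b : ℤ) (hcop : IsCoprime a b) (hsa : Squarefree a)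
    (hsb : Squarefree b) (hab : ¬ (3 : ℤ) ∣ a * b)
    (p : ℕ) [Fact p.Prime] (hp : p % 3 = 1) (hpa : (p : ℤ) ∣ a) :
    (∃ x y z : ℚ_[p], (x ≠ 0 ∨ y ≠ 0 ∨ z ≠ 0) ∧
      (a : ℚ_[p]) * x ^ 3 + (b : ℚ_[p]) * y ^ 3 = z ^ 3) ↔
    (∃ c : ZMod p, c ^ 3 = (b : ZMod p)) := by
  have hpp := (Fact.out : p.Prime)
  have hp3 : p ≠ 3 := by rintro rfl; norm_num at hp
  have hpb : ¬ (p:ℤ) ∣ b := by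
    intro hd
    have h2 := hpp.two_le
    rcases Int.isUnit_iff.mp (hcop.isUnit_of_dvd' hpa hd) with h | h <;> omega
  have ha0 : a ≠ 0 := hsa.ne_zero
  have hb0 : b ≠ 0 := hsb.ne_zero
  have haQ : (a : ℚ_[p]) ≠ 0 := Int.cast_ne_zero.mpr ha0
  have hbQ : (b : ℚ_[p]) ≠ 0 := Int.cast_ne_zero.mpr hb0
  have va : ((a : ℚ_[p])).valuation = 1 := aux_val_int_one hpa hsa
  have vb : ((b : ℚ_[p])).valuation = 0 := aux_val_int_zero hpb
  constructor
  · rintro ⟨x, y, z, hne, heq⟩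
    -- Step 1: y ≠ 0, z ≠ 0, same valuation, and x has valuation ≥ that (or is 0)
    have key : y ≠ 0 ∧ z ≠ 0 ∧ y.valuation = z.valuation ∧
        (x = 0 ∨ z.valuation ≤ x.valuation) := by
      by_cases hy : y = 0
      · subst hy
        simp only [ne_eq, mul_zero] at heq hne
        rw [zero_pow (by norm_num), mul_zero, add_zero] at heq
        by_cases hx : x = 0
        · subst hx
          rw [zero_pow (by norm_num), mul_zero] at heq
          have hz0 : z = 0 := pow_eq_zero_iff (n := 3) (by norm_num) |>.mp heq.symm
          simp [hz0] at hne
        · have hz : z ≠ 0 := by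
            intro hz; rw [hz, zero_pow (by norm_num)] at heq
            exact hx (pow_eq_zero_iff (n := 3) (by norm_num) |>.mp
              ((mul_eq_zero.mp heq).resolve_left haQ))
          have hv := congrArg Padic.valuation heq
          rw [Padic.valuation_mul haQ (pow_ne_zero _ hx), va,
            aux_val_cube hx, aux_val_cube hz] at hv
          omega
      · by_cases hz : z = 0
        · subst hz
          rw [zero_pow (by norm_num)] at heq
          have hx : x ≠ 0 := by
            intro hx; rw [hx, zero_pow (by norm_num), mul_zero, zero_add] at heq
            exact hy (pow_eq_zero_iff (n := 3) (by norm_num) |>.mp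
              ((mul_eq_zero.mp heq).resolve_left hbQ))
          have heq' : (a : ℚ_[p]) * x ^ 3 = -((b : ℚ_[p]) * y ^ 3) :=
            eq_neg_of_add_eq_zero_left heq
          have hv := congrArg Padic.valuation heq'
          rw [Padic.valuation_mul haQ (pow_ne_zero _ hx), va, aux_val_cube hx,
            aux_val_neg, Padic.valuation_mul hbQ (pow_ne_zero _ hy), vb,
            aux_val_cube hy] at hv
          omega
        · by_cases hx : x = 0
          · subst hx
            rw [zero_pow (by norm_num), mul_zero, zero_add] at heq
            have hv := congrArg Padic.valuation heq
            rw [Padic.valuation_mul hbQ (pow_ne_zero _ hy), vb,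
              aux_val_cube hy, aux_val_cube hz] at hv
            exact ⟨hy, hz, by omega, Or.inl rfl⟩
          · have ht1 : (a : ℚ_[p]) * x ^ 3 ≠ 0 := mul_ne_zero haQ (pow_ne_zero _ hx)
            have ht2 : (b : ℚ_[p]) * y ^ 3 ≠ 0 := mul_ne_zero hbQ (pow_ne_zero _ hy)
            have ht3 : (a : ℚ_[p]) * x ^ 3 + (b : ℚ_[p]) * y ^ 3 ≠ 0 := by
              rw [heq]; exact pow_ne_zero _ hz
            have hv1 : ((a : ℚ_[p]) * x ^ 3).valuation = 1 + 3 * x.valuation := by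
              rw [Padic.valuation_mul haQ (pow_ne_zero _ hx), va, aux_val_cube hx]
            have hv2 : ((b : ℚ_[p]) * y ^ 3).valuation = 3 * y.valuation := by
              rw [Padic.valuation_mul hbQ (pow_ne_zero _ hy), vb, aux_val_cube hy]
              ring
            have hne12 : ((a : ℚ_[p]) * x ^ 3).valuation ≠ ((b : ℚ_[p]) * y ^ 3).valuation := by
              rw [hv1, hv2]; omega
            have hmin := aux_val_add_eq_min ht1 ht2 ht3 hne12
            rw [heq, aux_val_cube hz, hv1, hv2] at hmin
            rcases min_cases (1 + 3 * x.valuation) (3 * y.valuation) with ⟨h, _⟩ | ⟨h, _⟩ <;>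
              rw [h] at hmin
            · omega
            · exact ⟨hy, hz, by omega, Or.inr (by omega)⟩
    obtain ⟨hy, hz, hyz, hx⟩ := key
    -- Step 2: scale by p^(-m)
    set m : ℤ := z.valuation with hm
    have hpQ : (p : ℚ_[p]) ≠ 0 := by
      exact_mod_cast Nat.cast_ne_zero.mpr hpp.ne_zero
    set π : ℚ_[p] := (p : ℚ_[p]) ^ (-m) with hπ
    have hπ0 : π ≠ 0 := zpow_ne_zero _ hpQ
    have hvπ : π.valuation = -m := by
      have hp1 : (1:ℝ) < p := by exact_mod_cast hpp.one_lt
      have hinj := zpow_right_injective₀ (by linarith : (0:ℝ) < p) (ne_of_gt hp1)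
      have hnorm : ‖π‖ = (p:ℝ) ^ (-(-m)) := by
        rw [hπ, norm_zpow, Padic.norm_p, ← zpow_neg_one, ← zpow_mul]
        ring_nf
      rw [Padic.norm_eq_zpow_neg_valuation hπ0] at hnorm
      have := hinj hnorm
      omega
    have hvmul : ∀ w : ℚ_[p], w ≠ 0 → (w * π).valuation = w.valuation - m := by
      intro w hw
      rw [Padic.valuation_mul hw hπ0, hvπ]; ring
    have hXle : ‖x * π‖ ≤ 1 := by
      by_cases hx0 : x = 0
      · simp [hx0]
      · rw [Padic.norm_le_one_iff_val_nonneg, hvmul x hx0]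
        rcases hx with h | h
        · exact absurd h hx0
        · omega
    have hYval : (y * π).valuation = 0 := by rw [hvmul y hy]; omega
    have hZval : (z * π).valuation = 0 := by rw [hvmul z hz]; omega
    have hYnorm : ‖y * π‖ = 1 := by
      rw [Padic.norm_eq_zpow_neg_valuation (mul_ne_zero hy hπ0), hYval]; norm_num
    have hZnorm : ‖z * π‖ = 1 := by
      rw [Padic.norm_eq_zpow_neg_valuation (mul_ne_zero hz hπ0), hZval]; norm_num
    set X : ℤ_[p] := ⟨x * π, hXle⟩ with hX
    set Y : ℤ_[p] := ⟨y * π, le_of_eq hYnorm⟩ with hY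
    set Z : ℤ_[p] := ⟨z * π, le_of_eq hZnorm⟩ with hZ
    have heqZ : (a : ℤ_[p]) * X ^ 3 + (b : ℤ_[p]) * Y ^ 3 = Z ^ 3 := by
      apply Subtype.coe_injective
      push_cast
      show (a : ℚ_[p]) * (x * π) ^ 3 + (b : ℚ_[p]) * (y * π) ^ 3 = (z * π) ^ 3
      linear_combination π ^ 3 * heq
    -- Step 3: reduce mod p
    have hred := congrArg PadicInt.toZMod heqZ
    rw [map_add, map_mul, map_mul, map_pow, map_pow, map_pow, map_intCast, map_intCast] at hred
    rw [show ((a : ZMod p)) = 0 by rw [ZMod.intCast_zmod_eq_zero_iff_dvd]; exact hpa,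
      zero_mul, zero_add] at hred
    have hYz : PadicInt.toZMod Y ≠ 0 := aux_toZMod_ne_zero (by rw [PadicInt.norm_def]; exact hYnorm)
    refine ⟨PadicInt.toZMod Z * (PadicInt.toZMod Y)⁻¹, ?_⟩
    field_simp
    linear_combination -hred
  · rintro ⟨c, hc⟩
    obtain ⟨w, hw⟩ := aux_hensel hpb hp3 c hc
    refine ⟨0, 1, (w : ℚ_[p]), Or.inr (Or.inl one_ne_zero), ?_⟩
    have := congrArg (fun t : ℤ_[p] => (t : ℚ_[p])) hw
    push_cast at this
    rw [this]
    ring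
end
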